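/- Let h ≥ 2 be an integer and ε > 0, and let (P, ≺) be a partially ordered set on n elements with comparability graph G. If the number of (2h−1)-tuples (x_1, x_2, ..., x_{2h−1}) of elements of P with x_1 ≺ x_2 ≺ ... ≺ x_{2h−1} is at least ε·n^{2h−1}, then G contains K_h[⌈ε·n⌉]. -/

import Mathlib

/-- The number of `r`-element vertex subsets of `G` inducing a complete subgraph
(copies of `K_r`). -/
noncomputable def cliqueCount {V : Type*} [Fintype V] (G : SimpleGraph V) (r : ℕ) : ℕ :=
  Set.ncard {s : Finset V | s.card = r ∧ G.IsClique (s : Set V)}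

/-- `G` contains `K_r[t]`: `r` pairwise disjoint vertex sets of size `t` with all
pairs of vertices from distinct sets adjacent. -/
def ContainsBlowup {V : Type*} (G : SimpleGraph V) (r t : ℕ) : Prop :=
  ∃ A : Fin r → Finset V,
    (∀ i, (A i).card = t) ∧
    (∀ i j, i ≠ j → Disjoint (A i) (A j)) ∧
    (∀ i j, i ≠ j → ∀ x ∈ A i, ∀ y ∈ A j, G.Adj x y)

/-- The ordered graph `G` on `Fin n` contains an induced monotone path with `m`
vertices: `v 0 < v 1 < ⋯ < v (m-1)` with adjacency exactly between consecutive
vertices. -/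
def HasIndMonPath {n : ℕ} (G : SimpleGraph (Fin n)) (m : ℕ) : Prop :=
  ∃ v : Fin m → Fin n, StrictMono v ∧
    ∀ i j : Fin m, G.Adj (v i) (v j) ↔ ((i : ℕ) + 1 = (j : ℕ) ∨ (j : ℕ) + 1 = (i : ℕ))

/-- The comparability graph of a relation `R` (e.g. a strict partial order):
distinct elements are adjacent iff they are related in one direction. -/
def compGraph {α : Type*} (R : α → α → Prop) : SimpleGraph α where
  Adj x y := x ≠ y ∧ (R x y ∨ R y x)
  symm := ⟨fun _ _ h => ⟨h.1.symm, h.2.symm⟩⟩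
  loopless := ⟨fun _ h => h.1 rfl⟩

open Classical in
noncomputable def chainSet (m : ℕ) {α : Type} [Fintype α] (R : α → α → Prop) :
    Finset (Fin (2*m+3) → α) :=
  Finset.univ.filter (fun x => ∀ i : ℕ, ∀ hi : i + 1 < 2*m+3,
    R (x ⟨i, Nat.lt_of_succ_lt hi⟩) (x ⟨i+1, hi⟩))

open Classical in
noncomputable def ivl (m : ℕ) {α : Type} [Fintype α] (R : α → α → Prop)
    (y : Fin (m+1) → α) (k : Fin (m+2)) : Finset α :=
  Finset.univ.filter (fun a =>
    (∀ j : Fin (m+1), j.val + 1 = k.val → R (y j) a) ∧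
    (∀ j : Fin (m+1), j.val = k.val → R a (y j)))

def odv (m : ℕ) {α : Type} (x : Fin (2*m+3) → α) (j : Fin (m+1)) : α :=
  x ⟨2*j.val+1, by have := j.isLt; omega⟩

def evv (m : ℕ) {α : Type} (x : Fin (2*m+3) → α) (k : Fin (m+2)) : α :=
  x ⟨2*k.val, by have := k.isLt; omega⟩

theorem aux (m : ℕ) (ε : ℝ) (hε : 0 < ε)
    (α : Type) [Fintype α] (R : α → α → Prop) (hR : IsStrictOrder α R)
    (hchains : ε * (Fintype.card α : ℝ) ^ (2*m+3) ≤
      (Set.ncard {x : Fin (2*m+3) → α |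
        ∀ i : ℕ, ∀ hi : i + 1 < 2*m+3,
          R (x ⟨i, Nat.lt_of_succ_lt hi⟩) (x ⟨i + 1, hi⟩)} : ℝ)) :
    ContainsBlowup (compGraph R) (m+2) ⌈ε * (Fintype.card α : ℝ)⌉₊ := by
  classical
  rcases Nat.eq_zero_or_pos (Fintype.card α) with h0 | hpos
  · have ht0 : ⌈ε * (Fintype.card α : ℝ)⌉₊ = 0 := by rw [h0]; simp
    rw [ht0]
    exact ⟨fun _ => ∅, fun _ => rfl, fun _ _ _ => Finset.disjoint_empty_left _,
      fun i j _ x hx => (Finset.notMem_empty x hx).elim⟩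
  set n := Fintype.card α with hnd
  have hα : Nonempty α := Fintype.card_pos_iff.mp hpos
  have tr : ∀ {a b c : α}, R a b → R b c → R a c :=
    fun hab hbc => hR.toIsTrans.trans _ _ _ hab hbc
  have ir : ∀ a : α, ¬ R a a := hR.toIrrefl.irrefl
  -- rewrite ncard as card of chainSet
  have hset : {x : Fin (2*m+3) → α |
      ∀ i : ℕ, ∀ hi : i + 1 < 2*m+3,
        R (x ⟨i, Nat.lt_of_succ_lt hi⟩) (x ⟨i + 1, hi⟩)} = ↑(chainSet m R) := by
    ext x; simp [chainSet]
  rw [hset, Set.ncard_coe_finset] at hchains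
  -- chains go up
  have chainLT : ∀ x ∈ chainSet m R, ∀ (p q : ℕ) (hp : p < 2*m+3) (hq : q < 2*m+3),
      p < q → R (x ⟨p, hp⟩) (x ⟨q, hq⟩) := by
    intro x hx p q
    induction q with
    | zero => intro _ _ h; omega
    | succ qv ih =>
      intro hp hq hlt
      have hstep : R (x ⟨qv, Nat.lt_of_succ_lt hq⟩) (x ⟨qv+1, hq⟩) :=
        (Finset.mem_filter.mp hx).2 qv hq
      rcases Nat.lt_or_ge p qv with h' | h'
      · exact tr (ih hp (Nat.lt_of_succ_lt hq) h') hstep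
      · have hpq : p = qv := by omega
        subst hpq
        exact hstep
  -- counting step 1
  have count1 : (chainSet m R (α := α)).card ≤
      ∑ y : Fin (m+1) → α, ∏ k : Fin (m+2), (ivl m R y k).card := by
    rw [Finset.card_eq_sum_card_fiberwise
      (f := odv m) (t := Finset.univ) (fun x _ => Finset.mem_univ _)]
    refine Finset.sum_le_sum fun y _ => ?_
    have hmaps : ∀ x ∈ ((chainSet m R).filter (fun x => odv m x = y) : Finset _),
        evv m x ∈ Fintype.piFinset (fun k => ivl m R y k) := by
      intro x hx
      rw [Finset.mem_filter] at hx
      obtain ⟨hx1, hx2⟩ := hx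
      rw [Fintype.mem_piFinset]
      intro k
      rw [ivl, Finset.mem_filter]
      refine ⟨Finset.mem_univ _, ?_, ?_⟩
      · intro j hj
        rw [← hx2]
        exact chainLT x hx1 (2*j.val+1) (2*k.val)
          (by have := j.isLt; omega) (by have := k.isLt; omega) (by omega)
      · intro j hj
        rw [← hx2]
        exact chainLT x hx1 (2*k.val) (2*j.val+1)
          (by have := k.isLt; omega) (by have := j.isLt; omega) (by omega)
    have hinj : Set.InjOn (evv m)
        (((chainSet m R).filter (fun x => odv m x = y)) : Set (Fin (2*m+3) → α)) := by
      intro x hx x' hx' he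
      rw [Finset.mem_coe, Finset.mem_filter] at hx hx'
      funext i
      have hi2 := i.isLt
      rcases Nat.even_or_odd i.val with ⟨c, hc⟩ | ⟨c, hc⟩
      · have hieq : i = (⟨2*c, by omega⟩ : Fin (2*m+3)) := Fin.ext (show i.val = 2*c by omega)
        rw [hieq]
        exact congrFun he ⟨c, by omega⟩
      · have hieq : i = (⟨2*c+1, by omega⟩ : Fin (2*m+3)) := Fin.ext (show i.val = 2*c+1 by omega)
        rw [hieq]
        exact congrFun (hx.2.trans hx'.2.symm) ⟨c, by omega⟩
    calc ((chainSet m R).filter (fun x => odv m x = y)).card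
        ≤ (Fintype.piFinset (fun k => ivl m R y k)).card :=
          Finset.card_le_card_of_injOn (evv m) hmaps hinj
      _ = ∏ k : Fin (m+2), (ivl m R y k).card := Fintype.card_piFinset _
  -- choose a good y
  obtain ⟨y, hy⟩ : ∃ y : Fin (m+1) → α,
      ε * (n:ℝ)^(m+2) ≤ ∏ k : Fin (m+2), ((ivl m R y k).card : ℝ) := by
    by_contra hcon
    push_neg at hcon
    have hlt : ∑ y : Fin (m+1) → α, ∏ k : Fin (m+2), ((ivl m R y k).card : ℝ)
        < ∑ _y : Fin (m+1) → α, ε * (n:ℝ)^(m+2) :=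
      Finset.sum_lt_sum_of_nonempty Finset.univ_nonempty (fun y _ => hcon y)
    have hsumconst : ∑ _y : Fin (m+1) → α, ε * (n:ℝ)^(m+2)
        = (n:ℝ)^(m+1) * (ε * (n:ℝ)^(m+2)) := by
      rw [Finset.sum_const, Finset.card_univ, nsmul_eq_mul]
      congr 1
      rw [Fintype.card_fun]
      push_cast [Fintype.card_fin]
      ring
    have hpows : (n:ℝ)^(m+1) * (ε * (n:ℝ)^(m+2)) = ε * (n:ℝ)^(2*m+3) := by
      rw [show 2*m+3 = (m+1)+(m+2) by omega, pow_add]; ring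
    have hc2 : (↑(chainSet m R (α := α)).card : ℝ)
        ≤ ∑ y : Fin (m+1) → α, ∏ k : Fin (m+2), ((ivl m R y k).card : ℝ) := by
      exact_mod_cast count1
    exact absurd (lt_of_le_of_lt (hchains.trans hc2)
      (lt_of_lt_of_le hlt (le_of_eq (hsumconst.trans hpows)))) (lt_irrefl _)
  -- every interval is large
  have hbig : ∀ k : Fin (m+2), ε * (n:ℝ) ≤ ((ivl m R y k).card : ℝ) := by
    intro k
    have hle_n : ∀ j : Fin (m+2), ((ivl m R y j).card : ℝ) ≤ (n:ℝ) := by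
      intro j
      exact_mod_cast Nat.cast_le.mpr
        (le_trans (Finset.card_filter_le _ _) (le_of_eq Finset.card_univ))
    have h1 : (∏ j : Fin (m+2), ((ivl m R y j).card : ℝ))
        ≤ ((ivl m R y k).card : ℝ) * (n:ℝ)^(m+1) := by
      rw [← Finset.mul_prod_erase Finset.univ _ (Finset.mem_univ k)]
      have h2 : (∏ j ∈ Finset.univ.erase k, ((ivl m R y j).card : ℝ)) ≤ (n:ℝ)^(m+1) := by
        calc (∏ j ∈ Finset.univ.erase k, ((ivl m R y j).card : ℝ))
            ≤ ∏ _j ∈ Finset.univ.erase k, (n:ℝ) :=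
              Finset.prod_le_prod (fun j _ => by positivity) (fun j _ => hle_n j)
          _ = (n:ℝ)^((Finset.univ.erase k).card) := by rw [Finset.prod_const]
          _ = (n:ℝ)^(m+1) := by
              rw [Finset.card_erase_of_mem (Finset.mem_univ k), Finset.card_univ,
                Fintype.card_fin]
              congr 1
      exact mul_le_mul_of_nonneg_left h2 (by positivity)
    have h3 : (ε * (n:ℝ)) * (n:ℝ)^(m+1) ≤ ((ivl m R y k).card : ℝ) * (n:ℝ)^(m+1) := by
      calc (ε * (n:ℝ)) * (n:ℝ)^(m+1) = ε * (n:ℝ)^(m+2) := by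
            rw [show m+2 = (m+1)+1 by omega, pow_succ]; ring
        _ ≤ ∏ j : Fin (m+2), ((ivl m R y j).card : ℝ) := hy
        _ ≤ _ := h1
    exact le_of_mul_le_mul_right h3 (pow_pos (by exact_mod_cast hpos) (m+1))
  have htceil : ∀ k : Fin (m+2), ⌈ε * (Fintype.card α : ℝ)⌉₊ ≤ (ivl m R y k).card :=
    fun k => Nat.ceil_le.mpr (hbig k)
  have htpos : 1 ≤ ⌈ε * (Fintype.card α : ℝ)⌉₊ :=
    Nat.one_le_iff_ne_zero.mpr (Nat.ceil_pos.mpr (by positivity)).ne'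
  have hnonempty : ∀ k : Fin (m+2), ∃ a, a ∈ ivl m R y k := by
    intro k
    have := lt_of_lt_of_le (Nat.lt_of_lt_of_le Nat.zero_lt_one htpos) (htceil k)
    obtain ⟨a, ha⟩ := Finset.card_pos.mp this
    exact ⟨a, ha⟩
  -- y is a chain
  have ystep : ∀ (j : ℕ) (hj : j + 1 < m+1),
      R (y ⟨j, Nat.lt_of_succ_lt hj⟩) (y ⟨j+1, hj⟩) := by
    intro j hj
    obtain ⟨a, ha⟩ := hnonempty ⟨j+1, by omega⟩
    rw [ivl, Finset.mem_filter] at ha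
    exact tr (ha.2.1 ⟨j, Nat.lt_of_succ_lt hj⟩ rfl) (ha.2.2 ⟨j+1, hj⟩ rfl)
  have ymono : ∀ (p q : ℕ) (hp : p < m+1) (hq : q < m+1), p < q →
      R (y ⟨p, hp⟩) (y ⟨q, hq⟩) := by
    intro p q
    induction q with
    | zero => intro _ _ h; omega
    | succ qv ih =>
      intro hp hq hlt
      have hstep := ystep qv hq
      rcases Nat.lt_or_ge p qv with h' | h'
      · exact tr (ih hp (Nat.lt_of_succ_lt hq) h') hstep
      · have hpq : p = qv := by omega
        subst hpq
        exact hstep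
  -- elements of distinct intervals are related
  have cross : ∀ (i j : Fin (m+2)), i.val < j.val →
      ∀ a ∈ ivl m R y i, ∀ b ∈ ivl m R y j, R a b := by
    intro i j hij a ha b hb
    rw [ivl, Finset.mem_filter] at ha hb
    have hj2 := j.isLt
    have hb1 : R (y ⟨j.val - 1, by omega⟩) b :=
      hb.2.1 ⟨j.val - 1, by omega⟩ (show j.val - 1 + 1 = j.val by omega)
    rcases Nat.lt_or_ge i.val (j.val - 1) with h' | h'
    · have ha2 : R a (y ⟨i.val, by omega⟩) := ha.2.2 ⟨i.val, by omega⟩ rfl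
      exact tr ha2 (tr (ymono i.val (j.val-1) (by omega) (by omega) h') hb1)
    · have ha2 : R a (y ⟨j.val - 1, by omega⟩) :=
        ha.2.2 ⟨j.val - 1, by omega⟩ (show j.val - 1 = i.val by omega)
      exact tr ha2 hb1
  -- assemble the blowup
  choose A hA1 hA2 using
    fun k : Fin (m+2) => Finset.exists_subset_card_eq (htceil k)
  refine ⟨A, hA2, ?_, ?_⟩
  · intro i j hij
    rw [Finset.disjoint_left]
    intro a hai haj
    have hai' := hA1 i hai
    have haj' := hA1 j haj
    rcases Nat.lt_or_ge i.val j.val with hlt | hge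
    · exact ir a (cross i j hlt a hai' a haj')
    · have hlt : j.val < i.val := by
        rcases Nat.lt_or_ge j.val i.val with h | h
        · exact h
        · exact absurd (Fin.ext (le_antisymm h hge)) hij
      exact ir a (cross j i hlt a haj' a hai')
  · intro i j hij a hai b hbj
    have hai' := hA1 i hai
    have hbj' := hA1 j hbj
    show a ≠ b ∧ (R a b ∨ R b a)
    rcases Nat.lt_or_ge i.val j.val with hlt | hge
    · have hr := cross i j hlt a hai' b hbj'
      exact ⟨fun he => ir b (he ▸ hr), Or.inl hr⟩
    · have hlt : j.val < i.val := by
        rcases Nat.lt_or_ge j.val i.val with h | h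
        · exact h
        · exact absurd (Fin.ext (le_antisymm h hge)) hij
      have hr := cross j i hlt b hbj' a hai'
      exact ⟨fun he => ir b (he ▸ hr), Or.inr hr⟩


theorem stmt_11 (h : ℕ) (hh : 2 ≤ h) (ε : ℝ) (hε : 0 < ε)
    (α : Type) [Fintype α] (R : α → α → Prop) (hR : IsStrictOrder α R)
    (hchains : ε * (Fintype.card α : ℝ) ^ (2 * h - 1) ≤
      (Set.ncard {x : Fin (2 * h - 1) → α |
        ∀ i : ℕ, ∀ hi : i + 1 < 2 * h - 1,
          R (x ⟨i, Nat.lt_of_succ_lt hi⟩) (x ⟨i + 1, hi⟩)} : ℝ)) :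
    ContainsBlowup (compGraph R) h ⌈ε * (Fintype.card α : ℝ)⌉₊ := by
  obtain ⟨m, rfl⟩ : ∃ m, h = m + 2 := ⟨h - 2, by omega⟩
  have e : 2 * (m + 2) - 1 = 2 * m + 3 := by omega
  rw [e] at hchains
  exact aux m ε hε α R hR hchains
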